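/- For y ∈ W^{1,2}(-1,1) with vanishing moments ∫_{-1}^{1} t^k y dt = 0 for k = 0,1,2 (m = 3), the sharp constant B_3(x) in |y(x)| ≤ B_3(x)(∫_{-1}^{1}|y'|^2)^{1/2} for x ∈ (-1,1) is B_3(x) = √(297 + 1260x^2 - 5370x^4 + 5900x^6 - 1575x^8)/(16√15). -/

import Mathlib

/-- `W12 y g` : `y` is absolutely continuous on `[-1,1]` with derivative `g ∈ L²(-1,1)`. -/
def W12 (y g : ℝ → ℝ) : Prop :=
  IntervalIntegrable g MeasureTheory.volume (-1) 1 ∧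
  IntervalIntegrable (fun t => g t ^ 2) MeasureTheory.volume (-1) 1 ∧
  ∀ t ∈ Set.Icc (-1 : ℝ) 1, y t = y (-1) + ∫ s in (-1 : ℝ)..t, g s

/-- The sharp constant `B₃(x)`. -/
noncomputable def B3 (x : ℝ) : ℝ :=
  Real.sqrt (297 + 1260 * x ^ 2 - 5370 * x ^ 4 + 5900 * x ^ 6 - 1575 * x ^ 8) /
    (16 * Real.sqrt 15)

open MeasureTheory Set intervalIntegral

noncomputable def aa (x : ℝ) : ℝ := 15/16*(x - x^3/3)
noncomputable def bb (x : ℝ) : ℝ := 105/16*(x^2/2 - x^4/4 - 7/60)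
noncomputable def P0 (x t : ℝ) : ℝ := (t-1)/2 - aa x*(1-t^2) - bb x*(t-t^3)
noncomputable def Kk (x t : ℝ) : ℝ := (if t ≤ x then 1 else 0) + P0 x t
noncomputable def Nn (x : ℝ) : ℝ := 99/1280 + (21/64)*x^2 - (179/128)*x^4 + (295/192)*x^6 - (105/256)*x^8

lemma hasDerivAt_poly6 (c0 c1 c2 c3 c4 c5 c6 t : ℝ) :
    HasDerivAt (fun s => c0*s + c1*s^2/2 + c2*s^3/3 + c3*s^4/4 + c4*s^5/5 + c5*s^6/6 + c6*s^7/7)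
      (c0 + c1*t + c2*t^2 + c3*t^3 + c4*t^4 + c5*t^5 + c6*t^6) t := by
  have H := ((((((((hasDerivAt_pow 1 t).const_mul c0).add
    (((hasDerivAt_pow 2 t).const_mul c1).div_const 2)).add
    (((hasDerivAt_pow 3 t).const_mul c2).div_const 3)).add
    (((hasDerivAt_pow 4 t).const_mul c3).div_const 4)).add
    (((hasDerivAt_pow 5 t).const_mul c4).div_const 5)).add
    (((hasDerivAt_pow 6 t).const_mul c5).div_const 6)).add
    (((hasDerivAt_pow 7 t).const_mul c6).div_const 7))
  have hfun : (fun s : ℝ => c0*s^1 + c1*s^2/2 + c2*s^3/3 + c3*s^4/4 + c4*s^5/5 + c5*s^6/6 + c6*s^7/7)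
      = fun s : ℝ => c0*s + c1*s^2/2 + c2*s^3/3 + c3*s^4/4 + c4*s^5/5 + c5*s^6/6 + c6*s^7/7 := by
    funext s; ring
  have H : HasDerivAt (fun s : ℝ => c0*s^1 + c1*s^2/2 + c2*s^3/3 + c3*s^4/4 + c4*s^5/5 + c5*s^6/6 + c6*s^7/7) _ t := H
  rw [hfun] at H
  convert H using 1
  push_cast
  ring

lemma integral_poly6 (f : ℝ → ℝ) (c0 c1 c2 c3 c4 c5 c6 u v : ℝ)
    (h : ∀ t, f t = c0 + c1*t + c2*t^2 + c3*t^3 + c4*t^4 + c5*t^5 + c6*t^6) :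
    ∫ t in u..v, f t =
      (c0*v + c1*v^2/2 + c2*v^3/3 + c3*v^4/4 + c4*v^5/5 + c5*v^6/6 + c6*v^7/7)
      - (c0*u + c1*u^2/2 + c2*u^3/3 + c3*u^4/4 + c4*u^5/5 + c5*u^6/6 + c6*u^7/7) := by
  have hf : f = fun t => c0 + c1*t + c2*t^2 + c3*t^3 + c4*t^4 + c5*t^5 + c6*t^6 := funext h
  subst hf
  exact integral_eq_sub_of_hasDerivAt (fun t _ => hasDerivAt_poly6 c0 c1 c2 c3 c4 c5 c6 t)
    ((by fun_prop : Continuous fun t : ℝ => c0 + c1*t + c2*t^2 + c3*t^3 + c4*t^4 + c5*t^5 + c6*t^6).intervalIntegrable u v)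

lemma split_integrable {x : ℝ} (hx : x ∈ Set.Ioo (-1:ℝ) 1) (f p q : ℝ → ℝ)
    (hp : ∀ t ∈ Set.Ioc (-1:ℝ) x, f t = p t) (hq : ∀ t ∈ Set.Ioc x (1:ℝ), f t = q t)
    (hpi : IntervalIntegrable p volume (-1) x) (hqi : IntervalIntegrable q volume x 1) :
    IntervalIntegrable f volume (-1) 1 := by
  have h1x : (-1:ℝ) ≤ x := le_of_lt hx.1
  have hx1 : x ≤ (1:ℝ) := le_of_lt hx.2
  have i1 : IntervalIntegrable f volume (-1) x := by
    rw [intervalIntegrable_iff_integrableOn_Ioc_of_le h1x] at hpi ⊢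
    exact hpi.congr_fun (fun t ht => (hp t ht).symm) measurableSet_Ioc
  have i2 : IntervalIntegrable f volume x 1 := by
    rw [intervalIntegrable_iff_integrableOn_Ioc_of_le hx1] at hqi ⊢
    exact hqi.congr_fun (fun t ht => (hq t ht).symm) measurableSet_Ioc
  exact i1.trans i2

lemma split_int {x : ℝ} (hx : x ∈ Set.Ioo (-1:ℝ) 1) (f p q : ℝ → ℝ)
    (hp : ∀ t ∈ Set.Ioc (-1:ℝ) x, f t = p t) (hq : ∀ t ∈ Set.Ioc x (1:ℝ), f t = q t)
    (hpi : IntervalIntegrable p volume (-1) x) (hqi : IntervalIntegrable q volume x 1) :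
    ∫ t in (-1:ℝ)..1, f t = (∫ t in (-1:ℝ)..x, p t) + ∫ t in x..(1:ℝ), q t := by
  have h1x : (-1:ℝ) ≤ x := le_of_lt hx.1
  have hx1 : x ≤ (1:ℝ) := le_of_lt hx.2
  have i1 : IntervalIntegrable f volume (-1) x := by
    rw [intervalIntegrable_iff_integrableOn_Ioc_of_le h1x] at hpi ⊢
    exact hpi.congr_fun (fun t ht => (hp t ht).symm) measurableSet_Ioc
  have i2 : IntervalIntegrable f volume x 1 := by
    rw [intervalIntegrable_iff_integrableOn_Ioc_of_le hx1] at hqi ⊢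
    exact hqi.congr_fun (fun t ht => (hq t ht).symm) measurableSet_Ioc
  rw [← integral_add_adjacent_intervals i1 i2]
  congr 1
  · rw [integral_of_le h1x, integral_of_le h1x]
    exact setIntegral_congr_fun measurableSet_Ioc hp
  · rw [integral_of_le hx1, integral_of_le hx1]
    exact setIntegral_congr_fun measurableSet_Ioc hq
lemma orthK1 (x : ℝ) (hx : x ∈ Set.Ioo (-1:ℝ) 1) :
    ∫ t in (-1:ℝ)..1, Kk x t * (1 - t^2) = 0 := by
  have hL := integral_poly6 (fun t => (1 + P0 x t) * (1 - t^2)) ((1/2) + (-15/16)*x + (5/16)*x^3) ((81/64) + (-105/32)*x^2 + (105/64)*x^4) ((-1/2) + (15/8)*x + (-5/8)*x^3) ((-65/32) + (105/16)*x^2 + (-105/32)*x^4) ((-15/16)*x + (5/16)*x^3) ((49/64) + (-105/32)*x^2 + (105/64)*x^4) 0 (-1) x (fun t => by simp only [P0, aa, bb]; ring)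
  have hR := integral_poly6 (fun t => P0 x t * (1 - t^2)) ((-1/2) + (-15/16)*x + (5/16)*x^3) ((81/64) + (-105/32)*x^2 + (105/64)*x^4) ((1/2) + (15/8)*x + (-5/8)*x^3) ((-65/32) + (105/16)*x^2 + (-105/32)*x^4) ((-15/16)*x + (5/16)*x^3) ((49/64) + (-105/32)*x^2 + (105/64)*x^4) 0 x 1 (fun t => by simp only [P0, aa, bb]; ring)
  rw [split_int hx _ (fun t => (1 + P0 x t) * (1 - t^2)) (fun t => P0 x t * (1 - t^2))
      (fun t ht => by simp only [Kk, if_pos ht.2])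
      (fun t ht => by simp only [Kk, if_neg (not_le.mpr ht.1), zero_add])
      ((by simp only [P0]; fun_prop : Continuous fun t => (1 + P0 x t) * (1 - t^2)).intervalIntegrable _ _)
      ((by simp only [P0]; fun_prop : Continuous fun t => P0 x t * (1 - t^2)).intervalIntegrable _ _), hL, hR]
  ring

lemma orthK2 (x : ℝ) (hx : x ∈ Set.Ioo (-1:ℝ) 1) :
    ∫ t in (-1:ℝ)..1, Kk x t * (t - t^3) = 0 := by
  have hL := integral_poly6 (fun t => (1 + P0 x t) * (t - t^3)) 0 ((1/2) + (-15/16)*x + (5/16)*x^3) ((81/64) + (-105/32)*x^2 + (105/64)*x^4) ((-1/2) + (15/8)*x + (-5/8)*x^3) ((-65/32) + (105/16)*x^2 + (-105/32)*x^4) ((-15/16)*x + (5/16)*x^3) ((49/64) + (-105/32)*x^2 + (105/64)*x^4) (-1) x (fun t => by simp only [P0, aa, bb]; ring)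
  have hR := integral_poly6 (fun t => P0 x t * (t - t^3)) 0 ((-1/2) + (-15/16)*x + (5/16)*x^3) ((81/64) + (-105/32)*x^2 + (105/64)*x^4) ((1/2) + (15/8)*x + (-5/8)*x^3) ((-65/32) + (105/16)*x^2 + (-105/32)*x^4) ((-15/16)*x + (5/16)*x^3) ((49/64) + (-105/32)*x^2 + (105/64)*x^4) x 1 (fun t => by simp only [P0, aa, bb]; ring)
  rw [split_int hx _ (fun t => (1 + P0 x t) * (t - t^3)) (fun t => P0 x t * (t - t^3))
      (fun t ht => by simp only [Kk, if_pos ht.2])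
      (fun t ht => by simp only [Kk, if_neg (not_le.mpr ht.1), zero_add])
      ((by simp only [P0]; fun_prop : Continuous fun t => (1 + P0 x t) * (t - t^3)).intervalIntegrable _ _)
      ((by simp only [P0]; fun_prop : Continuous fun t => P0 x t * (t - t^3)).intervalIntegrable _ _), hL, hR]
  ring

lemma normKsq (x : ℝ) (hx : x ∈ Set.Ioo (-1:ℝ) 1) :
    ∫ t in (-1:ℝ)..1, Kk x t * Kk x t = Nn x := by
  have hL := integral_poly6 (fun t => (1 + P0 x t) * (1 + P0 x t)) ((1/4) + (-15/16)*x + (225/256)*x^2 + (5/16)*x^3 + (-75/128)*x^4 + (25/256)*x^6) ((81/64) + (-1215/512)*x + (-105/32)*x^2 + (3555/512)*x^3 + (105/64)*x^4 + (-2625/512)*x^5 + (525/512)*x^7) ((6561/4096) + (15/16)*x + (-10305/1024)*x^2 + (-5/16)*x^3 + (32955/2048)*x^4 + (-11225/1024)*x^6 + (11025/4096)*x^8) ((-49/64) + (975/256)*x + (105/32)*x^2 + (-3475/256)*x^3 + (-105/64)*x^4 + (2625/256)*x^5 + (-525/256)*x^7) ((-3969/2048) + (7275/512)*x^2 + (-29475/1024)*x^4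 + (11075/512)*x^6 + (-11025/2048)*x^8) ((-735/512)*x + (3395/512)*x^3 + (-2625/512)*x^5 + (525/512)*x^7) ((2401/4096) + (-5145/1024)*x^2 + (27195/2048)*x^4 + (-11025/1024)*x^6 + (11025/4096)*x^8) (-1) x (fun t => by simp only [P0, aa, bb]; ring)
  have hR := integral_poly6 (fun t => P0 x t * P0 x t) ((1/4) + (15/16)*x + (225/256)*x^2 + (-5/16)*x^3 + (-75/128)*x^4 + (25/256)*x^6) ((-81/64) + (-1215/512)*x + (105/32)*x^2 + (3555/512)*x^3 + (-105/64)*x^4 + (-2625/512)*x^5 + (525/512)*x^7) ((6561/4096) + (-15/16)*x + (-10305/1024)*x^2 + (5/16)*x^3 + (32955/2048)*x^4 + (-11225/1024)*x^6 + (11025/4096)*x^8) ((49/64) + (975/256)*x + (-105/32)*x^2 + (-3475/256)*x^3 + (105/64)*x^4 + (2625/256)*x^5 + (-525/256)*x^7) ((-3969/2048) + (7275/512)*x^2 + (-29475/1024)*x^4 + (11075/512)*x^6 + (-11025/2048)*x^8) ((-735/512)*x + (3395/512)*x^3 + (-2625/512)*x^5 + (525/512)*x^7) ((2401/4096) + (-5145/1024)*x^2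 + (27195/2048)*x^4 + (-11025/1024)*x^6 + (11025/4096)*x^8) x 1 (fun t => by simp only [P0, aa, bb]; ring)
  rw [split_int hx _ (fun t => (1 + P0 x t) * (1 + P0 x t)) (fun t => P0 x t * P0 x t)
      (fun t ht => by simp only [Kk, if_pos ht.2])
      (fun t ht => by simp only [Kk, if_neg (not_le.mpr ht.1), zero_add])
      ((by simp only [P0]; fun_prop : Continuous fun t => (1 + P0 x t) * (1 + P0 x t)).intervalIntegrable _ _)
      ((by simp only [P0]; fun_prop : Continuous fun t => P0 x t * P0 x t).intervalIntegrable _ _), hL, hR]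
  simp only [Nn]; ring

open MeasureTheory Set intervalIntegral

lemma fub (g : ℝ → ℝ) (hg : IntervalIntegrable g volume (-1) 1) (w : ℝ → ℝ) (hw : Continuous w) :
    ∫ t in (-1:ℝ)..1, w t * (∫ s in (-1:ℝ)..t, g s)
      = ∫ s in (-1:ℝ)..1, (∫ t in s..(1:ℝ), w t) * g s := by
  have h11 : (-1:ℝ) ≤ 1 := by norm_num
  have hgI : IntegrableOn g (Ioc (-1:ℝ) 1) volume :=
    (intervalIntegrable_iff_integrableOn_Ioc_of_le h11).1 hg
  have hwI : IntegrableOn w (Ioc (-1:ℝ) 1) volume :=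
    (intervalIntegrable_iff_integrableOn_Ioc_of_le h11).1 (hw.intervalIntegrable _ _)
  set μ := volume.restrict (Ioc (-1:ℝ) 1) with hμ
  -- the product function
  have hF : Integrable (Function.uncurry fun t s => if s ≤ t then w t * g s else 0) (μ.prod μ) := by
    have h1 : Integrable (fun p : ℝ × ℝ => w p.1 * g p.2) (μ.prod μ) := hwI.mul_prod hgI
    have h2 : MeasurableSet {p : ℝ × ℝ | p.2 ≤ p.1} := measurableSet_le measurable_snd measurable_fst
    have := h1.indicator h2
    refine this.congr (Filter.Eventually.of_forall fun p => ?_)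
    simp only [Function.uncurry]
    rw [Set.indicator_apply]
    rfl
  have key := integral_integral_swap hF
  -- LHS identification
  have lhs_eq : ∫ t in (-1:ℝ)..1, w t * (∫ s in (-1:ℝ)..t, g s)
      = ∫ t, (∫ s, (if s ≤ t then w t * g s else 0) ∂μ) ∂μ := by
    rw [integral_of_le h11]
    refine setIntegral_congr_fun measurableSet_Ioc fun t ht => ?_
    have : (∫ s in (-1:ℝ)..t, g s) = ∫ s, (if s ≤ t then g s else 0) ∂μ := by
      rw [integral_of_le (le_of_lt ht.1)]
      have : ∀ s, (if s ≤ t then g s else 0) = (Iic t).indicator g s := by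
        intro s; rw [Set.indicator_apply]; rfl
      simp_rw [this, hμ, MeasureTheory.setIntegral_indicator measurableSet_Iic,
        Set.Ioc_inter_Iic, min_eq_right ht.2]
    rw [this, ← MeasureTheory.integral_const_mul]
    congr 1; funext s
    by_cases h : s ≤ t <;> simp [h]
  -- RHS identification
  have rhs_eq : ∫ s, (∫ t, (if s ≤ t then w t * g s else 0) ∂μ) ∂μ
      = ∫ s in (-1:ℝ)..1, (∫ t in s..(1:ℝ), w t) * g s := by
    rw [integral_of_le h11]
    refine (setIntegral_congr_fun measurableSet_Ioc fun s hs => ?_).symm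
    have : (∫ t, (if s ≤ t then w t * g s else 0) ∂μ) = ∫ t in Ioc s 1, w t * g s := by
      have h1 : ∀ t, (if s ≤ t then w t * g s else 0) = (Ici s).indicator (fun t => w t * g s) t := by
        intro t; rw [Set.indicator_apply]; rfl
      have h2 : Ioc (-1:ℝ) 1 ∩ Ici s = Icc s 1 := by
        ext t
        simp only [mem_inter_iff, mem_Ioc, mem_Ici, mem_Icc]
        constructor
        · rintro ⟨⟨_, ht1⟩, hts⟩; exact ⟨hts, ht1⟩
        · rintro ⟨hts, ht1⟩; exact ⟨⟨lt_of_lt_of_le hs.1 hts, ht1⟩, hts⟩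
      simp_rw [h1, hμ, MeasureTheory.setIntegral_indicator measurableSet_Ici, h2,
        MeasureTheory.integral_Icc_eq_integral_Ioc]
    rw [this, MeasureTheory.integral_mul_const, integral_of_le hs.2]
  rw [lhs_eq, key, rhs_eq]
lemma moment_eq (g : ℝ → ℝ) (hg : IntervalIntegrable g volume (-1) 1) (y : ℝ → ℝ)
    (hy : ∀ t ∈ Set.Icc (-1:ℝ) 1, y t = y (-1) + ∫ s in (-1:ℝ)..t, g s) (k : ℕ) :
    ∫ t in (-1:ℝ)..1, t^k * y t
      = ((1 - (-1:ℝ)^(k+1))/((k:ℝ)+1)) * y (-1)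
        + ∫ s in (-1:ℝ)..1, ((1 - s^(k+1))/((k:ℝ)+1)) * g s := by
  have h11 : (-1:ℝ) ≤ 1 := by norm_num
  have hIcc : Set.uIcc (-1:ℝ) 1 = Set.Icc (-1:ℝ) 1 := Set.uIcc_of_le h11
  have hGcont : ContinuousOn (fun t => ∫ s in (-1:ℝ)..t, g s) (Set.uIcc (-1:ℝ) 1) :=
    continuousOn_primitive_interval' hg (by rw [hIcc]; exact ⟨le_refl _, h11⟩)
  have iG : IntervalIntegrable (fun t => t^k * ∫ s in (-1:ℝ)..t, g s) volume (-1) 1 :=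
    (ContinuousOn.mul (Continuous.continuousOn (by fun_prop)) hGcont).intervalIntegrable
  have ic : IntervalIntegrable (fun t => t^k * y (-1)) volume (-1) 1 :=
    ((by fun_prop : Continuous fun t : ℝ => t^k * y (-1))).intervalIntegrable _ _
  have e1 : ∫ t in (-1:ℝ)..1, t^k * y t
      = ∫ t in (-1:ℝ)..1, (t^k * y (-1) + t^k * ∫ s in (-1:ℝ)..t, g s) := by
    refine intervalIntegral.integral_congr fun t ht => ?_
    rw [hy t (hIcc ▸ ht)]; ring
  rw [e1, intervalIntegral.integral_add ic iG]
  congr 1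
  · rw [intervalIntegral.integral_mul_const, integral_pow]
    norm_num [mul_comm]
  · rw [fub g hg (fun t => t^k) (by fun_prop)]
    refine intervalIntegral.integral_congr fun s _ => ?_
    rw [integral_pow, one_pow]

lemma repr_lemma (x : ℝ) (hx : x ∈ Set.Ioo (-1:ℝ) 1) (y g : ℝ → ℝ) (hw : W12 y g)
    (hm : ∀ k < 3, (∫ t in (-1:ℝ)..1, t ^ k * y t) = 0) :
    y x = ∫ t in (-1:ℝ)..1, Kk x t * g t := by
  obtain ⟨hg, -, hy⟩ := hw
  have h11 : (-1:ℝ) ≤ 1 := by norm_num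
  set c := y (-1) with hc
  -- the three moment identities
  have E0 : 2*c + (∫ s in (-1:ℝ)..1, (1-s) * g s) = 0 := by
    have m := moment_eq g hg y hy 0
    rw [hm 0 (by norm_num)] at m
    have e : (∫ s in (-1:ℝ)..1, ((1 - s^(0+1))/(((0:ℕ):ℝ)+1)) * g s)
        = ∫ s in (-1:ℝ)..1, (1-s) * g s := by
      refine intervalIntegral.integral_congr fun s _ => ?_; push_cast; ring
    rw [e] at m; norm_num at m; linarith
  have E1 : (∫ s in (-1:ℝ)..1, (1-s^2) * g s) = 0 := by
    have m := moment_eq g hg y hy 1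
    rw [hm 1 (by norm_num)] at m
    have e : (∫ s in (-1:ℝ)..1, ((1 - s^(1+1))/(((1:ℕ):ℝ)+1)) * g s)
        = ∫ s in (-1:ℝ)..1, (1/2) * ((1-s^2) * g s) := by
      refine intervalIntegral.integral_congr fun s _ => ?_; push_cast; ring
    rw [e, intervalIntegral.integral_const_mul] at m; norm_num at m; linarith
  have E2 : (2/3)*c + (1/3) * (∫ s in (-1:ℝ)..1, (1-s^3) * g s) = 0 := by
    have m := moment_eq g hg y hy 2
    rw [hm 2 (by norm_num)] at m
    have e : (∫ s in (-1:ℝ)..1, ((1 - s^(2+1))/(((2:ℕ):ℝ)+1)) * g s)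
        = ∫ s in (-1:ℝ)..1, (1/3) * ((1-s^3) * g s) := by
      refine intervalIntegral.integral_congr fun s _ => ?_; push_cast; ring
    rw [e, intervalIntegral.integral_const_mul] at m; norm_num at m; linarith
  -- integrability of the pieces
  have i1 : IntervalIntegrable (fun t => (1-t) * g t) volume (-1) 1 :=
    hg.continuousOn_mul (by fun_prop)
  have i2 : IntervalIntegrable (fun t => (1-t^2) * g t) volume (-1) 1 :=
    hg.continuousOn_mul (by fun_prop)
  have i3 : IntervalIntegrable (fun t => (1-t^3) * g t) volume (-1) 1 :=
    hg.continuousOn_mul (by fun_prop)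
  have iP0 : IntervalIntegrable (fun t => P0 x t * g t) volume (-1) 1 :=
    hg.continuousOn_mul (by unfold P0; fun_prop)
  have iInd : IntervalIntegrable (fun t => (if t ≤ x then (1:ℝ) else 0) * g t) volume (-1) 1 := by
    refine split_integrable hx _ g (fun _ => 0) (fun t ht => by rw [if_pos ht.2, one_mul])
      (fun t ht => by rw [if_neg (not_le.mpr ht.1), zero_mul])
      (hg.mono_set ?_) intervalIntegrable_const
    rw [Set.uIcc_of_le (by linarith [hx.1] : (-1:ℝ) ≤ x), Set.uIcc_of_le h11]
    exact Set.Icc_subset_Icc le_rfl (le_of_lt hx.2)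
  -- split K·g
  have e1 : ∫ t in (-1:ℝ)..1, Kk x t * g t
      = (∫ t in (-1:ℝ)..1, (if t ≤ x then (1:ℝ) else 0) * g t)
        + ∫ t in (-1:ℝ)..1, P0 x t * g t := by
    rw [← intervalIntegral.integral_add iInd iP0]
    refine intervalIntegral.integral_congr fun t _ => ?_
    simp only [Kk]; ring
  have e2 : (∫ t in (-1:ℝ)..1, (if t ≤ x then (1:ℝ) else 0) * g t) = ∫ t in (-1:ℝ)..x, g t := by
    rw [split_int hx _ g (fun _ => 0) (fun t ht => by rw [if_pos ht.2, one_mul])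
      (fun t ht => by rw [if_neg (not_le.mpr ht.1), zero_mul])
      (hg.mono_set ?_) intervalIntegrable_const]
    · simp
    · rw [Set.uIcc_of_le (by linarith [hx.1] : (-1:ℝ) ≤ x), Set.uIcc_of_le h11]
      exact Set.Icc_subset_Icc le_rfl (le_of_lt hx.2)
  have e3 : ∫ t in (-1:ℝ)..1, P0 x t * g t
      = -(1/2) * (∫ t in (-1:ℝ)..1, (1-t) * g t)
        - aa x * (∫ t in (-1:ℝ)..1, (1-t^2) * g t)
        + bb x * ((∫ t in (-1:ℝ)..1, (1-t) * g t) - ∫ t in (-1:ℝ)..1, (1-t^3) * g t) := by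
    rw [← intervalIntegral.integral_sub i1 i3, ← intervalIntegral.integral_const_mul,
      ← intervalIntegral.integral_const_mul, ← intervalIntegral.integral_const_mul,
      ← intervalIntegral.integral_sub (i1.const_mul _) (i2.const_mul _),
      ← intervalIntegral.integral_add ((i1.const_mul _).sub (i2.const_mul _))
        ((i1.sub i3).const_mul _)]
    refine intervalIntegral.integral_congr fun t _ => ?_
    simp only [P0, aa, bb]; ring
  have hyx : y x = c + ∫ t in (-1:ℝ)..x, g t :=
    hy x ⟨le_of_lt hx.1, le_of_lt hx.2⟩
  rw [e1, e2, e3, hyx]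
  have hJ1 : (∫ s in (-1:ℝ)..1, (1-s) * g s) = -2*c := by linarith
  have hJ3 : (∫ s in (-1:ℝ)..1, (1-s^3) * g s) = -2*c := by linarith
  rw [hJ1, hJ3, E1]
  ring
lemma Npos (x : ℝ) (hx : x ∈ Set.Ioo (-1:ℝ) 1) : 0 < Nn x := by
  have h1 : x^2 < 1 := by nlinarith [hx.1, hx.2]
  have h0 : 0 ≤ x^2 := sq_nonneg x
  simp only [Nn]
  nlinarith [sq_nonneg (x^2 - 2/3), sq_nonneg (x^4 - x^2), sq_nonneg (x^2*(1-x^2)),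
    mul_nonneg h0 (le_of_lt (sub_pos.mpr h1)), sq_nonneg (x^4 - 2/3*x^2),
    mul_nonneg (mul_nonneg h0 h0) (le_of_lt (sub_pos.mpr h1))]

lemma B3_eq (x : ℝ) : B3 x = Real.sqrt (Nn x) := by
  have h1 : (297 + 1260 * x ^ 2 - 5370 * x ^ 4 + 5900 * x ^ 6 - 1575 * x ^ 8 : ℝ)
      = 3840 * Nn x := by simp only [Nn]; ring
  have h2 : (16:ℝ) * Real.sqrt 15 = Real.sqrt 3840 := by
    rw [show (3840:ℝ) = 16^2 * 15 by norm_num, Real.sqrt_mul (by positivity),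
      Real.sqrt_sq (by norm_num)]
  have h3 : Real.sqrt 3840 ≠ 0 := by
    simp only [ne_eq, Real.sqrt_eq_zero']; push_neg; norm_num
  rw [B3, h1, Real.sqrt_mul (by norm_num : (0:ℝ) ≤ 3840), h2,
    mul_div_cancel_left₀ _ h3]

lemma iKmul (x : ℝ) (hx : x ∈ Set.Ioo (-1:ℝ) 1) (h : ℝ → ℝ) (hh : Continuous h) :
    IntervalIntegrable (fun t => Kk x t * h t) volume (-1) 1 := by
  refine split_integrable hx _ (fun t => (1 + P0 x t) * h t) (fun t => P0 x t * h t)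
    (fun t ht => by simp only [Kk, if_pos ht.2])
    (fun t ht => by simp only [Kk, if_neg (not_le.mpr ht.1), zero_add])
    (((by unfold P0; fun_prop : Continuous fun t => (1 + P0 x t) * h t)).intervalIntegrable _ _)
    (((by unfold P0; fun_prop : Continuous fun t => P0 x t * h t)).intervalIntegrable _ _)

lemma iKK (x : ℝ) (hx : x ∈ Set.Ioo (-1:ℝ) 1) :
    IntervalIntegrable (fun t => Kk x t * Kk x t) volume (-1) 1 := by
  refine split_integrable hx _ (fun t => (1 + P0 x t) * (1 + P0 x t)) (fun t => P0 x t * P0 x t)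
    (fun t ht => by simp only [Kk, if_pos ht.2])
    (fun t ht => by simp only [Kk, if_neg (not_le.mpr ht.1), zero_add])
    (((by unfold P0; fun_prop : Continuous fun t => (1 + P0 x t) * (1 + P0 x t))).intervalIntegrable _ _)
    (((by unfold P0; fun_prop : Continuous fun t => P0 x t * P0 x t)).intervalIntegrable _ _)

lemma iKg (x : ℝ) (hx : x ∈ Set.Ioo (-1:ℝ) 1) (g : ℝ → ℝ)
    (hg : IntervalIntegrable g volume (-1) 1) :
    IntervalIntegrable (fun t => Kk x t * g t) volume (-1) 1 := by
  have hsub1 : Set.uIcc (-1:ℝ) x ⊆ Set.uIcc (-1:ℝ) 1 := by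
    rw [Set.uIcc_of_le (by linarith [hx.1] : (-1:ℝ) ≤ x), Set.uIcc_of_le (by norm_num : (-1:ℝ) ≤ 1)]
    exact Set.Icc_subset_Icc le_rfl (le_of_lt hx.2)
  have hsub2 : Set.uIcc x (1:ℝ) ⊆ Set.uIcc (-1:ℝ) 1 := by
    rw [Set.uIcc_of_le (le_of_lt hx.2), Set.uIcc_of_le (by norm_num : (-1:ℝ) ≤ 1)]
    exact Set.Icc_subset_Icc (le_of_lt hx.1) le_rfl
  refine split_integrable hx _ (fun t => (1 + P0 x t) * g t) (fun t => P0 x t * g t)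
    (fun t ht => by simp only [Kk, if_pos ht.2])
    (fun t ht => by simp only [Kk, if_neg (not_le.mpr ht.1), zero_add])
    ((hg.mono_set hsub1).continuousOn_mul (by unfold P0; fun_prop))
    ((hg.mono_set hsub2).continuousOn_mul (by unfold P0; fun_prop))

theorem sharp_constant_m3 (x : ℝ) (hx : x ∈ Set.Ioo (-1:ℝ) 1) :
    (∀ y g : ℝ → ℝ, W12 y g →
      (∀ k < 3, (∫ t in (-1:ℝ)..1, t ^ k * y t) = 0) →
      |y x| ≤ B3 x * Real.sqrt (∫ t in (-1:ℝ)..1, (g t) ^ 2)) ∧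
    (∀ B : ℝ,
      (∀ y g : ℝ → ℝ, W12 y g →
        (∀ k < 3, (∫ t in (-1:ℝ)..1, t ^ k * y t) = 0) →
        |y x| ≤ B * Real.sqrt (∫ t in (-1:ℝ)..1, (g t) ^ 2)) →
      B3 x ≤ B) := by
  have h11 : (-1:ℝ) ≤ 1 := by norm_num
  have hNpos := Npos x hx
  have hA : (∫ t in (-1:ℝ)..1, Kk x t * Kk x t) = Nn x := normKsq x hx
  have hB3pos : 0 < B3 x := by rw [B3_eq]; exact Real.sqrt_pos.mpr hNpos
  have hB3sq : B3 x ^ 2 = Nn x := by rw [B3_eq, Real.sq_sqrt hNpos.le]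
  constructor
  · -- upper bound
    intro y g hw hm
    have hg := hw.1
    have hg2 := hw.2.1
    have hrep := repr_lemma x hx y g hw hm
    set A := (∫ t in (-1:ℝ)..1, Kk x t * Kk x t) with hAdef
    set Bv := (∫ t in (-1:ℝ)..1, Kk x t * g t) with hBdef
    set C := (∫ t in (-1:ℝ)..1, (g t) ^ 2) with hCdef
    have iK2 := iKK x hx
    have iKg' := iKg x hx g hg
    have hC0 : 0 ≤ C := intervalIntegral.integral_nonneg h11 (fun u _ => sq_nonneg _)
    have hexp : (∫ t in (-1:ℝ)..1, (Bv * Kk x t - A * g t)^2)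
        = Bv^2 * A - 2*Bv*A*Bv + A^2 * C := by
      rw [show (fun t => (Bv * Kk x t - A * g t)^2)
          = fun t => (Bv^2 * (Kk x t * Kk x t) - 2*Bv*A*(Kk x t * g t)) + A^2 * (g t)^2
          from funext fun t => by ring]
      rw [intervalIntegral.integral_add ((iK2.const_mul _).sub (iKg'.const_mul _))
          (hg2.const_mul _),
        intervalIntegral.integral_sub (iK2.const_mul _) (iKg'.const_mul _),
        intervalIntegral.integral_const_mul, intervalIntegral.integral_const_mul,
        intervalIntegral.integral_const_mul]
    have h0 : 0 ≤ (∫ t in (-1:ℝ)..1, (Bv * Kk x t - A * g t)^2) :=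
      intervalIntegral.integral_nonneg h11 (fun u _ => sq_nonneg _)
    rw [hexp] at h0
    have hApos : 0 < A := by rw [hA]; exact hNpos
    have hCS : Bv^2 ≤ A * C := by nlinarith [h0, hApos]
    calc |y x| = Real.sqrt (Bv^2) := by rw [hrep, Real.sqrt_sq_eq_abs]
    _ ≤ Real.sqrt (A * C) := Real.sqrt_le_sqrt hCS
    _ = Real.sqrt A * Real.sqrt C := Real.sqrt_mul hApos.le _
    _ = B3 x * Real.sqrt C := by rw [hA, ← B3_eq x]
  · -- sharpness
    intro B hB
    set c0 := -(1/2) * ∫ t in (-1:ℝ)..1, (1-t) * Kk x t with hc0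
    set y0 := fun t : ℝ => c0 + ∫ s in (-1:ℝ)..t, Kk x s with hy0def
    have iK : IntervalIntegrable (Kk x) volume (-1) 1 := by
      have := iKmul x hx (fun _ => 1) continuous_const
      simpa using this
    have iK2' : IntervalIntegrable (fun t => Kk x t ^ 2) volume (-1) 1 := by
      rw [show (fun t => Kk x t ^ 2) = fun t => Kk x t * Kk x t from funext fun t => by ring]
      exact iKK x hx
    have hy0 : ∀ t ∈ Set.Icc (-1:ℝ) 1, y0 t = y0 (-1) + ∫ s in (-1:ℝ)..t, Kk x s := by
      intro t _
      simp only [hy0def, intervalIntegral.integral_same, add_zero]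
    have hW : W12 y0 (Kk x) := ⟨iK, iK2', hy0⟩
    have hy0m1 : y0 (-1) = c0 := by
      simp only [hy0def, intervalIntegral.integral_same, add_zero]
    have hmom : ∀ k < 3, (∫ t in (-1:ℝ)..1, t ^ k * y0 t) = 0 := by
      intro k hk
      interval_cases k
      · rw [moment_eq (Kk x) iK y0 hy0 0, hy0m1]
        have e : (∫ s in (-1:ℝ)..1, ((1 - s^(0+1))/(((0:ℕ):ℝ)+1)) * Kk x s)
            = ∫ t in (-1:ℝ)..1, (1-t) * Kk x t :=
          intervalIntegral.integral_congr fun s _ => by push_cast; ring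
        rw [e, hc0]
        push_cast
        ring
      · rw [moment_eq (Kk x) iK y0 hy0 1, hy0m1]
        have e : (∫ s in (-1:ℝ)..1, ((1 - s^(1+1))/(((1:ℕ):ℝ)+1)) * Kk x s)
            = ∫ s in (-1:ℝ)..1, (1/2) * (Kk x s * (1 - s^2)) :=
          intervalIntegral.integral_congr fun s _ => by push_cast; ring
        rw [e, intervalIntegral.integral_const_mul, orthK1 x hx]
        norm_num
      · rw [moment_eq (Kk x) iK y0 hy0 2, hy0m1]
        have iA : IntervalIntegrable (fun s => (1-s) * Kk x s) volume (-1) 1 := by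
          rw [show (fun s => (1-s) * Kk x s) = fun s => Kk x s * (1-s)
            from funext fun s => by ring]
          exact iKmul x hx _ (by fun_prop)
        have iB' : IntervalIntegrable (fun s => Kk x s * (s - s^3)) volume (-1) 1 :=
          iKmul x hx _ (by fun_prop)
        have e : (∫ s in (-1:ℝ)..1, ((1 - s^(2+1))/(((2:ℕ):ℝ)+1)) * Kk x s)
            = ∫ s in (-1:ℝ)..1, ((1/3) * ((1-s) * Kk x s) + (1/3) * (Kk x s * (s - s^3))) :=
          intervalIntegral.integral_congr fun s _ => by push_cast; ring
        rw [e, intervalIntegral.integral_add (iA.const_mul _) (iB'.const_mul _),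
          intervalIntegral.integral_const_mul, intervalIntegral.integral_const_mul,
          orthK2 x hx, hc0]
        push_cast
        ring
    have hval : y0 x = Nn x := by
      rw [repr_lemma x hx y0 (Kk x) hW hmom, hA]
    have hg2eq : (∫ t in (-1:ℝ)..1, (Kk x t) ^ 2) = Nn x :=
      (intervalIntegral.integral_congr (fun t _ => by ring)).trans hA
    have hest := hB y0 (Kk x) hW hmom
    rw [hval, hg2eq, abs_of_pos hNpos, ← B3_eq] at hest
    nlinarith [hest, hB3pos, hB3sq]
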